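/- (Explicit example of a non-cylindrical ruled translating soliton.) Define Y(s,t) = (−(1/2)·log(1 + s²) + t, arctan(s) + s + t·s, s + t·s) for s ∈ ℝ and t > −3/2, i.e., the ruled surface with base curve γ(s) = (−(1/2)log(1 + s²), arctan(s) + s, s) and ruling direction w(s) = (1, s, s). Then at every such (s,t) one has EG − F² = (3 + 2t)/(1 + s²) > 0 (the surface is spacelike, hence non-degenerate), and Y satisfies the translating soliton equation with respect to v = (1, 0, 0). -/

import Mathlib

noncomputable section

/-- The Lorentzian (Minkowski) inner product on ℝ³:
`⟨a,b⟩ = a₁b₁ + a₂b₂ − a₃b₃`. -/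
def mink (a b : Fin 3 → ℝ) : ℝ := a 0 * b 0 + a 1 * b 1 - a 2 * b 2

/-- Determinant of the 3×3 matrix with rows `a`, `b`, `c`. -/
def det3 (a b c : Fin 3 → ℝ) : ℝ :=
  a 0 * (b 1 * c 2 - b 2 * c 1) - a 1 * (b 0 * c 2 - b 2 * c 0)
    + a 2 * (b 0 * c 1 - b 1 * c 0)

/-- Partial derivative `X_s` of a parametrized surface `X(s,t)`. -/
def pS (X : ℝ → ℝ → Fin 3 → ℝ) (s t : ℝ) : Fin 3 → ℝ := deriv (fun a => X a t) s

/-- Partial derivative `X_t`. -/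
def pT (X : ℝ → ℝ → Fin 3 → ℝ) (s t : ℝ) : Fin 3 → ℝ := deriv (fun b => X s b) t

/-- Second partial derivative `X_ss`. -/
def pSS (X : ℝ → ℝ → Fin 3 → ℝ) (s t : ℝ) : Fin 3 → ℝ := deriv (fun a => pS X a t) s

/-- Mixed second partial derivative `X_st`. -/
def pST (X : ℝ → ℝ → Fin 3 → ℝ) (s t : ℝ) : Fin 3 → ℝ := deriv (fun a => pT X a t) s

/-- Second partial derivative `X_tt`. -/
def pTT (X : ℝ → ℝ → Fin 3 → ℝ) (s t : ℝ) : Fin 3 → ℝ := deriv (fun b => pT X s b) t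

/-- Coefficient `E = ⟨X_s, X_s⟩` of the first fundamental form. -/
def coefE (X : ℝ → ℝ → Fin 3 → ℝ) (s t : ℝ) : ℝ := mink (pS X s t) (pS X s t)

/-- Coefficient `F = ⟨X_s, X_t⟩` of the first fundamental form. -/
def coefF (X : ℝ → ℝ → Fin 3 → ℝ) (s t : ℝ) : ℝ := mink (pS X s t) (pT X s t)

/-- Coefficient `G = ⟨X_t, X_t⟩` of the first fundamental form. -/
def coefG (X : ℝ → ℝ → Fin 3 → ℝ) (s t : ℝ) : ℝ := mink (pT X s t) (pT X s t)

/-- `EG − F²` at `(s,t)`. -/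
def disc (X : ℝ → ℝ → Fin 3 → ℝ) (s t : ℝ) : ℝ :=
  coefE X s t * coefG X s t - coefF X s t ^ 2

/-- The translating soliton equation with respect to the velocity `v` at the point `(s,t)`:
`E·det(X_s,X_t,X_tt) − 2F·det(X_s,X_t,X_st) + G·det(X_s,X_t,X_ss)
  = −|EG − F²|·det(X_s,X_t,v)`. -/
def SolitonEqAt (X : ℝ → ℝ → Fin 3 → ℝ) (v : Fin 3 → ℝ) (s t : ℝ) : Prop :=
  coefE X s t * det3 (pS X s t) (pT X s t) (pTT X s t)
    - 2 * coefF X s t * det3 (pS X s t) (pT X s t) (pST X s t)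
    + coefG X s t * det3 (pS X s t) (pT X s t) (pSS X s t)
  = -|disc X s t| * det3 (pS X s t) (pT X s t) v

def Ymap : ℝ → ℝ → Fin 3 → ℝ := fun s t =>
  ![-(1 / 2) * Real.log (1 + s ^ 2) + t, Real.arctan s + s + t * s, s + t * s]

lemma hden (a : ℝ) : (0:ℝ) < 1 + a ^ 2 := by positivity

lemma hasDerivAt_vec3 {f g h : ℝ → ℝ} {f' g' h' : ℝ} {x : ℝ}
    (hf : HasDerivAt f f' x) (hg : HasDerivAt g g' x) (hh : HasDerivAt h h' x) :
    HasDerivAt (fun a => ![f a, g a, h a]) ![f', g', h'] x := by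
  rw [hasDerivAt_pi]
  intro i
  fin_cases i <;> simpa

lemma hasDerivAt_den (a : ℝ) : HasDerivAt (fun x : ℝ => 1 + x ^ 2) (2 * a) a := by
  simpa using (hasDerivAt_pow 2 a).const_add 1

lemma pS_Y (s t : ℝ) :
    pS Ymap s t = ![-s / (1 + s ^ 2), 1 / (1 + s ^ 2) + 1 + t, 1 + t] := by
  have h0 : HasDerivAt (fun x : ℝ => -(1 / 2) * Real.log (1 + x ^ 2) + t)
      (-s / (1 + s ^ 2)) s := by
    have h2 : HasDerivAt (fun x : ℝ => Real.log (1 + x ^ 2))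
        ((1 + s ^ 2)⁻¹ * (2 * s)) s := by
      have := (Real.hasDerivAt_log (hden s).ne').comp s (hasDerivAt_den s)
      exact this
    have := (h2.const_mul (-(1 / 2))).add_const t
    exact this.congr_deriv (by ring)
  have h1 : HasDerivAt (fun x : ℝ => Real.arctan x + x + t * x)
      (1 / (1 + s ^ 2) + 1 + t) s := by
    have := ((Real.hasDerivAt_arctan s).add (hasDerivAt_id s)).add
      ((hasDerivAt_id s).const_mul t)
    exact this.congr_deriv (by ring)
  have h2 : HasDerivAt (fun x : ℝ => x + t * x) (1 + t) s := by
    have := (hasDerivAt_id s).add ((hasDerivAt_id s).const_mul t)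
    exact this.congr_deriv (by ring)
  exact (hasDerivAt_vec3 h0 h1 h2).deriv

lemma pT_Y (s t : ℝ) : pT Ymap s t = ![1, s, s] := by
  have h0 : HasDerivAt (fun b : ℝ => -(1 / 2) * Real.log (1 + s ^ 2) + b) 1 t := by
    simpa using (hasDerivAt_id t).const_add (-(1 / 2) * Real.log (1 + s ^ 2))
  have h1 : HasDerivAt (fun b : ℝ => Real.arctan s + s + b * s) s t := by
    simpa using ((hasDerivAt_id t).mul_const s).const_add (Real.arctan s + s)
  have h2 : HasDerivAt (fun b : ℝ => s + b * s) s t := by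
    simpa using ((hasDerivAt_id t).mul_const s).const_add s
  exact (hasDerivAt_vec3 h0 h1 h2).deriv

lemma pSS_Y (s t : ℝ) :
    pSS Ymap s t = ![(s ^ 2 - 1) / (1 + s ^ 2) ^ 2, -(2 * s) / (1 + s ^ 2) ^ 2, 0] := by
  have hf : (fun a => pS Ymap a t)
      = fun a => ![-a / (1 + a ^ 2), 1 / (1 + a ^ 2) + 1 + t, 1 + t] :=
    funext fun a => pS_Y a t
  unfold pSS
  rw [hf]
  have h0 : HasDerivAt (fun a : ℝ => -a / (1 + a ^ 2))
      ((s ^ 2 - 1) / (1 + s ^ 2) ^ 2) s := by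
    have := ((hasDerivAt_id s).neg).div (hasDerivAt_den s) (hden s).ne'
    exact this.congr_deriv (by simp only [Pi.neg_apply, id]; ring)
  have h1 : HasDerivAt (fun a : ℝ => 1 / (1 + a ^ 2) + 1 + t)
      (-(2 * s) / (1 + s ^ 2) ^ 2) s := by
    have := (((hasDerivAt_const s (1:ℝ)).div (hasDerivAt_den s) (hden s).ne').add_const
      1).add_const t
    exact this.congr_deriv (by ring)
  have h2 : HasDerivAt (fun _ : ℝ => 1 + t) 0 s := hasDerivAt_const s (1 + t)
  exact (hasDerivAt_vec3 h0 h1 h2).deriv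

lemma pST_Y (s t : ℝ) : pST Ymap s t = ![0, 1, 1] := by
  have hf : (fun a => pT Ymap a t) = fun a => ![(1:ℝ), a, a] :=
    funext fun a => pT_Y a t
  unfold pST
  rw [hf]
  exact (hasDerivAt_vec3 (hasDerivAt_const s 1) (hasDerivAt_id s) (hasDerivAt_id s)).deriv

lemma pTT_Y (s t : ℝ) : pTT Ymap s t = ![0, 0, 0] := by
  have hf : (fun b => pT Ymap s b) = fun _ => ![(1:ℝ), s, s] :=
    funext fun b => pT_Y s b
  unfold pTT
  rw [hf]
  exact (hasDerivAt_vec3 (hasDerivAt_const t 1) (hasDerivAt_const t s)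
    (hasDerivAt_const t s)).deriv

/-- the ruled surface
`Y(s,t) = (−(1/2)log(1+s²) + t, arctan s + s + ts, s + ts)`, `t > −3/2` (base curve
`γ(s) = (−(1/2)log(1+s²), arctan s + s, s)`, ruling direction `w(s) = (1,s,s)`), is
spacelike with `EG − F² = (3 + 2t)/(1 + s²) > 0` and is a non-cylindrical ruled
translating soliton with respect to `v = (1,0,0)`. -/
theorem stmt19 :
    ∀ s t : ℝ, -(3 / 2) < t →
      disc (fun s t =>
          ![-(1 / 2) * Real.log (1 + s ^ 2) + t, Real.arctan s + s + t * s, s + t * s]) s t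
        = (3 + 2 * t) / (1 + s ^ 2) ∧
      0 < disc (fun s t =>
          ![-(1 / 2) * Real.log (1 + s ^ 2) + t, Real.arctan s + s + t * s, s + t * s]) s t ∧
      SolitonEqAt
        (fun s t =>
          ![-(1 / 2) * Real.log (1 + s ^ 2) + t, Real.arctan s + s + t * s, s + t * s])
        ![1, 0, 0] s t := by
  intro s t ht
  have hd : disc Ymap s t = (3 + 2 * t) / (1 + s ^ 2) := by
    simp only [disc, coefE, coefF, coefG, mink, pS_Y, pT_Y,
      Matrix.cons_val_zero, Matrix.cons_val_one, Matrix.head_cons,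
      Matrix.cons_val_two, Matrix.tail_cons]
    field_simp
    ring
  have hpos : 0 < disc Ymap s t := by
    rw [hd]
    apply div_pos _ (hden s)
    linarith
  refine ⟨hd, hpos, ?_⟩
  show SolitonEqAt Ymap ![1, 0, 0] s t
  unfold SolitonEqAt
  rw [abs_of_pos hpos, hd]
  simp only [coefE, coefF, coefG, mink, det3, pS_Y, pT_Y, pSS_Y, pST_Y, pTT_Y,
    Matrix.cons_val_zero, Matrix.cons_val_one, Matrix.head_cons,
    Matrix.cons_val_two, Matrix.tail_cons]
  field_simp
  ring
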